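/- Let G = F_p^m, p an odd prime, and k with p | k, 2 ≤ k ≤ p^m such that B_k^0 is nonempty. Then (G, B_k^0) is a 2-design, i.e., any two distinct points of G are contained in the same number of k-subsets of G that sum to 0. -/

import Mathlib

open Finset

/-- The family of `k`-element subsets of `G` whose elements sum to `x`. -/
def sumBlocks (G : Type) [AddCommGroup G] [Fintype G] [DecidableEq G]
    (k : ℕ) (x : G) : Finset (Finset G) :=
  Finset.univ.filter (fun T => T.card = k ∧ T.sum id = x)

/-- The family of `k`-element subsets of `G \ {0}` whose elements sum to `x`. -/
def sumBlocksStar (G : Type) [AddCommGroup G] [Fintype G] [DecidableEq G]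
    (k : ℕ) (x : G) : Finset (Finset G) :=
  Finset.univ.filter (fun T => T.card = k ∧ T.sum id = x ∧ (0 : G) ∉ T)

/-- `(G, B_k^x)` is a 1-design: the block family is nonempty and every
point of `G` lies in the same number of blocks. -/
def isOneDesign (G : Type) [AddCommGroup G] [Fintype G] [DecidableEq G]
    (k : ℕ) (x : G) : Prop :=
  sumBlocks G k x ≠ ∅ ∧ ∃ r : ℕ, ∀ y : G,
    ((sumBlocks G k x).filter (fun B => y ∈ B)).card = r

/-- `e(x) = max {d : d ∣ exp(G), x ∈ dG}`. -/
noncomputable def eMax (G : Type) [AddCommGroup G] [Fintype G] [DecidableEq G] (x : G) : ℕ :=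
  Nat.findGreatest (fun d => d ∣ AddMonoid.exponent G ∧ ∃ y : G, d • y = x)
    (AddMonoid.exponent G)

lemma exists_linEquiv (K V : Type*) [Field K] [AddCommGroup V] [Module K V]
    (u u' : V) (hu : u ≠ 0) (hu' : u' ≠ 0) :
    ∃ L : V ≃ₗ[K] V, L u = u' := by
  classical
  have hs : LinearIndepOn K id ({u} : Set V) :=
    LinearIndepOn.singleton hu
  have hs' : LinearIndepOn K id ({u'} : Set V) :=
    LinearIndepOn.singleton hu'
  let b := Module.Basis.extend hs
  let b' := Module.Basis.extend hs'
  let e := b.indexEquiv b'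
  have hiu : u ∈ hs.extend (Set.subset_univ _) := hs.subset_extend _ rfl
  have hiu' : u' ∈ hs'.extend (Set.subset_univ _) := hs'.subset_extend _ rfl
  let iu : hs.extend (Set.subset_univ _) := ⟨u, hiu⟩
  let iu' : hs'.extend (Set.subset_univ _) := ⟨u', hiu'⟩
  refine ⟨b.equiv b' (e.trans (Equiv.swap (e iu) iu')), ?_⟩
  have h1 : b iu = u := Module.Basis.extend_apply_self hs iu
  have h2 : b' iu' = u' := Module.Basis.extend_apply_self hs' iu'
  have key := b.equiv_apply iu b' (e.trans (Equiv.swap (e iu) iu'))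
  rw [h1] at key
  simpa [h2] using key

lemma pair_count_eq (p m : ℕ) (hp : p.Prime) [NeZero p]
    (k : ℕ) (hpk : p ∣ k) (a b c d : Fin m → ZMod p) (hab : a ≠ b) (hcd : c ≠ d) :
    ((sumBlocks (Fin m → ZMod p) k 0).filter (fun B => ({a, b} : Finset _) ⊆ B)).card =
    ((sumBlocks (Fin m → ZMod p) k 0).filter (fun B => ({c, d} : Finset _) ⊆ B)).card := by
  classical
  haveI : Fact p.Prime := ⟨hp⟩
  have hu : b - a ≠ 0 := sub_ne_zero.mpr (Ne.symm hab)
  have hu' : d - c ≠ 0 := sub_ne_zero.mpr (Ne.symm hcd)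
  obtain ⟨L, hL⟩ := exists_linEquiv (ZMod p) (Fin m → ZMod p) (b - a) (d - c) hu hu'
  -- the affine bijection
  let g : (Fin m → ZMod p) ≃ (Fin m → ZMod p) :=
    { toFun := fun x => c + L (x - a)
      invFun := fun y => a + L.symm (y - c)
      left_inv := by intro x; simp
      right_inv := by intro y; simp }
  have hga : g a = c := by simp [g]
  have hgb : g b = d := by
    show c + L (b - a) = d
    rw [hL]; abel
  have hknsmul : ∀ v : (Fin m → ZMod p), k • v = 0 := by
    intro v
    obtain ⟨t, rfl⟩ := hpk
    rw [mul_comm, mul_smul]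
    have hpv : p • v = 0 := by
      rw [← Nat.cast_smul_eq_nsmul (ZMod p), ZMod.natCast_self, zero_smul]
    rw [hpv, smul_zero]
  -- image of a block is a block
  have hblock : ∀ B : Finset (Fin m → ZMod p), B ∈ sumBlocks (Fin m → ZMod p) k 0 → B.image g ∈ sumBlocks (Fin m → ZMod p) k 0 := by
    intro B hB
    simp only [sumBlocks, mem_filter, mem_univ, true_and] at hB ⊢
    obtain ⟨hcard, hsum⟩ := hB
    refine ⟨by rw [card_image_of_injective _ g.injective, hcard], ?_⟩
    rw [sum_image (fun x _ y _ h => g.injective h)]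
    have : ∑ x ∈ B, id (g x) = ∑ x ∈ B, (c - L a + L x) := by
      refine Finset.sum_congr rfl fun x _ => ?_
      show g x = c - L a + L x
      show c + L (x - a) = c - L a + L x
      rw [map_sub]; abel
    rw [this, Finset.sum_add_distrib, Finset.sum_const, hcard, hknsmul,
      ← map_sum]
    have : ∑ x ∈ B, x = 0 := by simpa using hsum
    rw [this, map_zero, add_zero]
  refine Finset.card_bij' (fun B _ => B.image g) (fun B _ => B.image g.symm)
    ?_ ?_ ?_ ?_
  · intro B hB
    simp only [mem_filter] at hB ⊢
    refine ⟨hblock B hB.1, ?_⟩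
    have hsub := hB.2
    rw [Finset.insert_subset_iff, Finset.singleton_subset_iff] at hsub ⊢
    constructor
    · rw [← hga]; exact Finset.mem_image_of_mem g hsub.1
    · rw [← hgb]; exact Finset.mem_image_of_mem g hsub.2
  · intro B hB
    simp only [mem_filter] at hB ⊢
    have h1 : B.image g.symm ∈ sumBlocks (Fin m → ZMod p) k 0 := by
      -- g.symm is the affine map x ↦ a + L.symm (x - c); reuse hblock-style argument
      simp only [sumBlocks, mem_filter, mem_univ, true_and] at hB ⊢
      obtain ⟨⟨hcard, hsum⟩, _⟩ := hB
      refine ⟨by rw [card_image_of_injective _ g.symm.injective, hcard], ?_⟩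
      rw [sum_image (fun x _ y _ h => g.symm.injective h)]
      have : ∑ x ∈ B, id (g.symm x) = ∑ x ∈ B, (a - L.symm c + L.symm x) := by
        refine Finset.sum_congr rfl fun x _ => ?_
        show g.symm x = a - L.symm c + L.symm x
        show a + L.symm (x - c) = a - L.symm c + L.symm x
        rw [map_sub]; abel
      rw [this, Finset.sum_add_distrib, Finset.sum_const, hcard, hknsmul,
        ← map_sum]
      have : ∑ x ∈ B, x = 0 := by simpa using hsum
      rw [this, map_zero, add_zero]
    refine ⟨h1, ?_⟩
    have hsub := hB.2
    rw [Finset.insert_subset_iff, Finset.singleton_subset_iff] at hsub ⊢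
    constructor
    · have h := Finset.mem_image_of_mem g.symm hsub.1
      rwa [← hga, Equiv.symm_apply_apply] at h
    · have h := Finset.mem_image_of_mem g.symm hsub.2
      rwa [← hgb, Equiv.symm_apply_apply] at h
  · intro B _
    ext x
    simp
  · intro B _
    ext x
    simp

theorem stmt7 (p m : ℕ) (hp : p.Prime) (hodd : Odd p) [NeZero p]
    (k : ℕ) (hk2 : 2 ≤ k) (hkn : k ≤ p ^ m) (hpk : p ∣ k)
    (hne : sumBlocks (Fin m → ZMod p) k 0 ≠ ∅) :
    ∃ lam : ℕ, ∀ S : Finset (Fin m → ZMod p), S.card = 2 →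
      ((sumBlocks (Fin m → ZMod p) k 0).filter (fun B => S ⊆ B)).card = lam := by
  classical
  have hcard : 2 ≤ Fintype.card (Fin m → ZMod p) := by
    rw [Fintype.card_fun, Fintype.card_fin, ZMod.card]
    exact le_trans hk2 hkn
  obtain ⟨S₀, _, hS₀⟩ := Finset.exists_subset_card_eq
    (show 2 ≤ (Finset.univ : Finset (Fin m → ZMod p)).card by simpa using hcard)
  obtain ⟨a₀, b₀, hab₀, rfl⟩ := Finset.card_eq_two.mp hS₀
  refine ⟨((sumBlocks (Fin m → ZMod p) k 0).filter
    (fun B => ({a₀, b₀} : Finset _) ⊆ B)).card, ?_⟩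
  intro S hS
  obtain ⟨a, b, hab, rfl⟩ := Finset.card_eq_two.mp hS
  exact pair_count_eq p m hp k hpk a b a₀ b₀ hab hab₀
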